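/- For n = 1 and p not a root of unity, the representation V = k[ξ] of A_p(r,s) given by x·ξ^m = ξ^{m+1}, y·ξ^m = [m]_{p,q} ξ^{m-1}, z^{±1}·ξ^m = p^{∓m} ξ^m, w^{±1}·ξ^m = q^{∓m} ξ^m is irreducible: every nonzero invariant subspace contains 1 and hence equals V. -/

import Mathlib

open Polynomial

/-- The (p,q)-number `[n]_{p,q} = Σ_{i=0}^{n-1} q^i p^{-(n-i)}`. -/
def pqNum {k : Type*} [Field k] (p q : k) (n : ℕ) : k :=
  ∑ i ∈ Finset.range n, q ^ i * p⁻¹ ^ (n - i)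

lemma pqNum_ne_zero {k : Type*} [Field k] (p q : k) (hp : p ≠ 0)
    (hroot : ∀ m : ℕ, 0 < m → p ^ m ≠ 1)
    (r s : ℕ) (hs : 0 < s) (hpq : p ^ r = q ^ s)
    (m : ℕ) (hm : 0 < m) : pqNum p q m ≠ 0 := by
  have key : ∀ n : ℕ, 0 < n → (p * q) ^ n ≠ 1 := by
    intro n hn h1
    have h2 : ((p * q) ^ n) ^ s = 1 := by rw [h1]; simp
    have h3 : p ^ (n * s) * (q ^ s) ^ n = 1 := by
      rw [← h2]; ring
    rw [← hpq, ← pow_mul, ← pow_add] at h3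
    exact hroot (n * s + r * n) (by positivity) h3
  have hpq1 : p * q ≠ 1 := fun h => key 1 one_pos (by simpa using h)
  have heq : pqNum p q m = p⁻¹ ^ m * ∑ i ∈ Finset.range m, (p * q) ^ i := by
    rw [Finset.mul_sum, pqNum]
    refine Finset.sum_congr rfl fun i hi => ?_
    rw [Finset.mem_range] at hi
    have : m = i + (m - i) := by omega
    rw [mul_pow]
    field_simp
    rw [show (1 / p) ^ m = (1 / p) ^ i * (1 / p) ^ (m - i) from by rw [← pow_add, Nat.add_sub_cancel' hi.le]]
    have hpi : (1 / p) ^ i * p ^ i = 1 := by rw [← mul_pow, one_div, inv_mul_cancel₀ hp, one_pow]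
    linear_combination (-(q ^ i * (1 / p) ^ (m - i))) * hpi
  rw [heq, geom_sum_eq hpq1]
  have h1 : (p * q) ^ m - 1 ≠ 0 := sub_ne_zero.mpr (key m hm)
  have h2 : p * q - 1 ≠ 0 := sub_ne_zero.mpr hpq1
  exact mul_ne_zero (pow_ne_zero _ (inv_ne_zero hp)) (div_ne_zero h1 h2)

/-- For `n = 1` and `p` not a root of unity (with `p^r = q^s`, `gcd(r,s) = 1`,
`r, s > 0`), the representation `V = k[ξ]` of `A_p(r,s)` given by `x·ξ^m = ξ^{m+1}`,
`y·ξ^m = [m]_{p,q} ξ^{m-1}`, `z^{±1}·ξ^m = p^{∓m} ξ^m`, `w^{±1}·ξ^m = q^{∓m} ξ^m` is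
irreducible: every nonzero invariant subspace equals `V`. -/
theorem Aprs_rep_irreducible {k : Type*} [Field k]
    (p q : k) (hp : p ≠ 0) (hq : q ≠ 0)
    (hroot : ∀ m : ℕ, 0 < m → p ^ m ≠ 1)
    (r s : ℕ) (hr : 0 < r) (hs : 0 < s) (hgcd : Nat.gcd r s = 1)
    (hpq : p ^ r = q ^ s)
    (Xop Yop Zop Zinv Wop Winv : Polynomial k →ₗ[k] Polynomial k)
    (hX : ∀ m : ℕ, Xop (X ^ m) = X ^ (m + 1))
    (hY : ∀ m : ℕ, Yop (X ^ m) = pqNum p q m • X ^ (m - 1))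
    (hZ : ∀ m : ℕ, Zop (X ^ m) = (p ^ m)⁻¹ • X ^ m)
    (hZinv : ∀ m : ℕ, Zinv (X ^ m) = p ^ m • X ^ m)
    (hW : ∀ m : ℕ, Wop (X ^ m) = (q ^ m)⁻¹ • X ^ m)
    (hWinv : ∀ m : ℕ, Winv (X ^ m) = q ^ m • X ^ m) :
    ∀ V : Submodule k (Polynomial k),
      (∀ f ∈ V, Xop f ∈ V ∧ Yop f ∈ V ∧ Zop f ∈ V ∧ Zinv f ∈ V ∧ Wop f ∈ V ∧ Winv f ∈ V) →
      V ≠ ⊥ → V = ⊤ := by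
  intro V hinv hne
  -- first: expand Yop on arbitrary polynomials
  have hYf : ∀ f : Polynomial k,
      Yop f = ∑ m ∈ Finset.range (f.natDegree + 1),
        (f.coeff m * pqNum p q m) • X ^ (m - 1) := by
    intro f
    conv_lhs => rw [f.as_sum_range_C_mul_X_pow, map_sum]
    refine Finset.sum_congr rfl fun m _ => ?_
    rw [← smul_eq_C_mul, map_smul, hY, smul_smul]
  -- key: 1 ∈ V
  have hone : (1 : Polynomial k) ∈ V := by
    obtain ⟨f, hfV, hf0⟩ := (Submodule.ne_bot_iff V).mp hne
    clear hne
    obtain ⟨d, hd⟩ : ∃ d, f.natDegree ≤ d := ⟨f.natDegree, le_rfl⟩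
    induction d generalizing f with
    | zero =>
      have : f = C (f.coeff 0) := Polynomial.eq_C_of_natDegree_le_zero hd
      have h0 : f.coeff 0 ≠ 0 := fun h => hf0 (by rw [this, h, map_zero])
      have : (1 : Polynomial k) = (f.coeff 0)⁻¹ • f := by
        rw [this]; simp [smul_C, inv_mul_cancel₀ h0]
      rw [this]
      exact V.smul_mem _ hfV
    | succ d ih =>
      by_cases hle : f.natDegree ≤ d
      · exact ih f hfV hf0 hle
      · have hdeg : f.natDegree = d + 1 := by omega
        set g := Yop f with hg
        have hgV : g ∈ V := (hinv f hfV).2.1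
        have hgsum : g = ∑ m ∈ Finset.range (d + 2),
            (f.coeff m * pqNum p q m) • X ^ (m - 1) := by
          rw [hg, hYf, hdeg]
        have hcoeff : ∀ j, g.coeff j = ∑ m ∈ Finset.range (d + 2),
            (f.coeff m * pqNum p q m) * (X ^ (m - 1) : Polynomial k).coeff j := by
          intro j
          rw [hgsum, Polynomial.finset_sum_coeff]
          refine Finset.sum_congr rfl fun m _ => ?_
          rw [Polynomial.coeff_smul, smul_eq_mul]
        have hgd : g.coeff d = f.coeff (d + 1) * pqNum p q (d + 1) := by
          rw [hcoeff]
          rw [Finset.sum_eq_single (d + 1)]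
          · simp
          · intro m hm hne'
            rw [Finset.mem_range] at hm
            rcases Nat.eq_zero_or_pos m with h0 | h0
            · subst h0; simp [pqNum]
            · have : d ≠ m - 1 := by omega
              rw [Polynomial.coeff_X_pow, if_neg this, mul_zero]
          · intro h; exact absurd (Finset.mem_range.mpr (by omega)) h
        have hld : f.coeff (d + 1) ≠ 0 := by
          rw [← hdeg]; exact Polynomial.coeff_ne_zero_of_eq_degree
            (Polynomial.degree_eq_natDegree hf0)
        have hpq1 : pqNum p q (d + 1) ≠ 0 :=
          pqNum_ne_zero p q hp hroot r s hs hpq (d + 1) (Nat.succ_pos d)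
        have hg0 : g ≠ 0 := fun h => by
          rw [h, Polynomial.coeff_zero] at hgd
          exact mul_ne_zero hld hpq1 hgd.symm
        have hgdeg : g.natDegree ≤ d := by
          rw [Polynomial.natDegree_le_iff_coeff_eq_zero]
          intro j hj
          rw [hcoeff]
          refine Finset.sum_eq_zero fun m hm => ?_
          rw [Finset.mem_range] at hm
          have : j ≠ m - 1 := by omega
          rw [Polynomial.coeff_X_pow, if_neg this, mul_zero]
        exact ih g hgV hg0 hgdeg
  -- all monomials are in V
  have hmon : ∀ m : ℕ, (X : Polynomial k) ^ m ∈ V := by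
    intro m
    induction m with
    | zero => simpa using hone
    | succ n ihn =>
      have := (hinv _ ihn).1
      rwa [hX] at this
  -- conclude
  rw [Submodule.eq_top_iff']
  intro f
  rw [f.as_sum_range_C_mul_X_pow]
  refine Submodule.sum_mem V fun m _ => ?_
  rw [← smul_eq_C_mul]
  exact V.smul_mem _ (hmon m)
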